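/- Let G be a graph, φ a vertex colouring, v a uniquely coloured vertex, and P a simple path in G passing through v. If the restriction of φ to each of the two subpaths of P obtained by deleting v is non-repetitive, then the colour sequence of P itself is non-repetitive. -/

import Mathlib

/-- A list is non-repetitive if no nonempty block `X ++ X` occurs as a block
of consecutive terms. -/
def IsNonrepetitive {α : Type*} (l : List α) : Prop :=
  ∀ X : List α, X ≠ [] → ¬ (X ++ X) <:+: l

private lemma prefix_of_avoid {α : Type*} {c : α} :
    ∀ (t u : List α) {w : List α}, t <+: u ++ c :: w → c ∉ t → t <+: u := by
  intro t
  induction t with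
  | nil => intro u w _ _; exact List.nil_prefix
  | cons y t' ih =>
    intro u w hpre hc
    cases u with
    | nil =>
      obtain ⟨rfl, -⟩ := List.cons_prefix_cons.mp hpre
      exact absurd (List.mem_cons_self) hc
    | cons z u' =>
      rw [List.cons_append, List.cons_prefix_cons] at hpre
      obtain ⟨rfl, hpre'⟩ := hpre
      have := ih u' hpre' (fun h => hc (List.mem_cons_of_mem _ h))
      exact List.cons_prefix_cons.mpr ⟨rfl, this⟩

private lemma infix_of_avoid {α : Type*} {c : α} :
    ∀ (u : List α) {t w : List α}, t <:+: u ++ c :: w → c ∉ t →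
      t <:+: u ∨ t <:+: w := by
  intro u
  induction u with
  | nil =>
    intro t w hinf hc
    simp only [List.nil_append] at hinf
    rcases List.infix_cons_iff.mp hinf with hpre | hinf'
    · cases t with
      | nil => exact Or.inr List.nil_infix
      | cons y t' =>
        obtain ⟨rfl, -⟩ := List.cons_prefix_cons.mp hpre
        exact absurd (List.mem_cons_self) hc
    · exact Or.inr hinf'
  | cons x u' ih =>
    intro t w hinf hc
    rw [List.cons_append] at hinf
    rcases List.infix_cons_iff.mp hinf with hpre | hinf'
    · cases t with
      | nil => exact Or.inl List.nil_infix
      | cons y t' =>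
        rw [List.cons_prefix_cons] at hpre
        obtain ⟨rfl, hpre'⟩ := hpre
        have := prefix_of_avoid t' u' hpre' (fun h => hc (List.mem_cons_of_mem _ h))
        exact Or.inl ((List.cons_prefix_cons.mpr ⟨rfl, this⟩).isInfix)
    · rcases ih hinf' hc with h | h
      · exact Or.inl (h.trans (List.suffix_cons x u').isInfix)
      · exact Or.inr h

/-- If `v` is uniquely coloured on a simple path `P` through `v`, and the two
subpaths of `P` obtained by deleting `v` have non-repetitive colour sequences,
then the colour sequence of `P` itself is non-repetitive. -/
theorem nonrepetitive_path_through_uniquely_coloured_vertex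
    {V β : Type*} (G : SimpleGraph V) (φ : V → β) (v : V)
    (a b : V) (p : G.Walk a b) (hp : p.IsPath)
    (hv : v ∈ p.support)
    (hunique : ∀ u ∈ p.support, u ≠ v → φ u ≠ φ v)
    (L1 L2 : List V) (hsplit : p.support = L1 ++ v :: L2)
    (h1 : IsNonrepetitive (L1.map φ))
    (h2 : IsNonrepetitive (L2.map φ)) :
    IsNonrepetitive (p.support.map φ) := by
  classical
  have hnodup : (L1 ++ v :: L2).Nodup := hsplit ▸ hp.support_nodup
  have hv1 : v ∉ L1 := fun h => (List.disjoint_of_nodup_append hnodup) h (List.mem_cons_self)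
  have hv2 : v ∉ L2 := by
    have := (List.nodup_append'.mp hnodup).2.1
    exact (List.nodup_cons.mp this).1
  have hc1 : φ v ∉ L1.map φ := by
    intro h
    obtain ⟨u, hu, hφ⟩ := List.mem_map.mp h
    have huS : u ∈ p.support := hsplit ▸ List.mem_append_left _ hu
    have hune : u ≠ v := fun h => hv1 (h ▸ hu)
    exact hunique u huS hune hφ
  have hc2 : φ v ∉ L2.map φ := by
    intro h
    obtain ⟨u, hu, hφ⟩ := List.mem_map.mp h
    have huS : u ∈ p.support := hsplit ▸ List.mem_append_right _ (List.mem_cons_of_mem _ hu)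
    have hune : u ≠ v := fun h => hv2 (h ▸ hu)
    exact hunique u huS hune hφ
  have hmap : p.support.map φ = L1.map φ ++ φ v :: L2.map φ := by
    rw [hsplit]; simp
  intro X hX hinf
  rw [hmap] at hinf
  by_cases hcX : φ v ∈ X
  · -- count argument
    have hcount : (L1.map φ ++ φ v :: L2.map φ).count (φ v) = 1 := by
      rw [List.count_append, List.count_cons_self,
        List.count_eq_zero_of_not_mem hc1, List.count_eq_zero_of_not_mem hc2]
    have hle : (X ++ X).count (φ v) ≤ 1 :=
      hcount ▸ hinf.sublist.count_le _
    rw [List.count_append] at hle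
    have hpos : 0 < X.count (φ v) := List.count_pos_iff.mpr hcX
    omega
  · have hcXX : φ v ∉ X ++ X := by simp [hcX]
    rcases infix_of_avoid _ hinf hcXX with h | h
    · exact h1 X hX h
    · exact h2 X hX h
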